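/- Let ρ(x) = 1/(2π(1−cos x)) and write ‖f‖_ρ = ( ∫_{−π}^{π} f² ρ dx )^{1/2}. Let u and ω be smooth, odd, 2π-periodic functions with u_x(0) = 0, let ψ be the odd 2π-periodic solution of −ψ_{xx} = ω, and set E = ( (1/2)(‖u_x‖_ρ² + ‖ω‖_ρ²) )^{1/2}. Then there is an absolute constant C > 0 (independent of u, ω) such that: (1) ‖ψ‖_ρ ≤ C E, ‖ψ_x − ψ_x(0)‖_ρ ≤ C E, ‖u‖_ρ ≤ C E; and (2) ‖ψ_x‖_{L^∞} ≤ C E, ‖ψ/ sin x‖_{L^∞} ≤ C E, ‖u‖_{L^∞} ≤ C E. -/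

import Mathlib

open Real MeasureTheory

/-- The singular weight `ρ(x) = 1/(2π(1 − cos x))` on the circle. -/
noncomputable def rho (x : ℝ) : ℝ := 1 / (2 * π * (1 - Real.cos x))

/-- The weighted `L²(ρ)` norm `‖f‖_ρ = (∫_{−π}^{π} f² ρ)^{1/2}`. -/
noncomputable def wnorm (f : ℝ → ℝ) : ℝ :=
  Real.sqrt (∫ x in (-π)..π, (f x)^2 * rho x)

namespace Stmt8Aux

lemma rho_nonneg (x : ℝ) : 0 ≤ rho x := by
  have h1 : Real.cos x ≤ 1 := Real.cos_le_one x
  have : (0:ℝ) ≤ 2 * π * (1 - Real.cos x) := by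
    have := Real.pi_pos; nlinarith
  exact one_div_nonneg.2 this

lemma rho_even (t : ℝ) : rho (-t) = rho t := by simp [rho]

lemma rho_zero : rho 0 = 0 := by simp [rho]

lemma measurable_rho : Measurable rho := by
  have : Measurable fun x : ℝ => 2 * π * (1 - Real.cos x) :=
    (measurable_const.mul (measurable_const.sub Real.continuous_cos.measurable))
  exact measurable_const.div this

lemma one_sub_cos_ge {x : ℝ} (hx : |x| ≤ π) : 2/π^2 * x^2 ≤ 1 - Real.cos x := by
  have := Real.cos_le_one_sub_mul_cos_sq hx
  linarith

lemma one_sub_cos_pos {x : ℝ} (hx : |x| ≤ π) (hx0 : x ≠ 0) : 0 < 1 - Real.cos x := by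
  have h := one_sub_cos_ge hx
  have hπ := Real.pi_pos
  have : 0 < 2/π^2 * x^2 := by positivity
  linarith

lemma rho_le {x : ℝ} (hx : |x| ≤ π) (hx0 : x ≠ 0) : rho x ≤ π / (4*x^2) := by
  have hπ := Real.pi_pos
  have h := one_sub_cos_ge hx
  have hc := one_sub_cos_pos hx hx0
  have hx2 : (0:ℝ) < x^2 := by positivity
  have h2 : 2*x^2 ≤ π^2*(1 - Real.cos x) := by
    rw [div_mul_eq_mul_div, div_le_iff₀ (by positivity)] at h
    linarith
  rw [rho, div_le_div_iff₀ (by positivity) (by positivity)]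
  nlinarith

lemma sq_rho_le {f : ℝ → ℝ} {L t : ℝ} (hL0 : 0 ≤ L)
    (hft : |f t| ≤ L * |t|) (ht : |t| ≤ π) : (f t)^2 * rho t ≤ L^2 * (π/4) := by
  have hπ := Real.pi_pos
  rcases eq_or_ne t 0 with h | h
  · subst h; rw [rho_zero, mul_zero]; positivity
  · have ht2 : (0:ℝ) < t^2 := by positivity
    calc (f t)^2 * rho t ≤ (L*|t|)^2 * (π/(4*t^2)) := by
          apply mul_le_mul _ (rho_le ht h) (rho_nonneg t) (by positivity)
          calc (f t)^2 = |f t|^2 := (sq_abs _).symm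
          _ ≤ (L*|t|)^2 := by apply pow_le_pow_left₀ (abs_nonneg _) hft
      _ = L^2 * (π/4) := by rw [mul_pow, sq_abs]; field_simp

lemma sqrt_le_of_le_sq {a c : ℝ} (hc : 0 ≤ c) (h : a ≤ c^2) : Real.sqrt a ≤ c := by
  calc Real.sqrt a ≤ Real.sqrt (c^2) := Real.sqrt_le_sqrt h
  _ = c := by rw [Real.sqrt_sq hc]

lemma sqrt_mul_sqrt_le {a b c : ℝ} (ha : 0 ≤ a) (hc : 0 ≤ c) (h : a * b ≤ c^2) :
    Real.sqrt a * Real.sqrt b ≤ c := by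
  rw [← Real.sqrt_mul ha]
  exact sqrt_le_of_le_sq hc h

lemma integrableOn_sq_rho (f : ℝ → ℝ) (hf : Continuous f) {L : ℝ} (hL0 : 0 ≤ L)
    (hL : ∀ t, |t| ≤ π → |f t| ≤ L * |t|) :
    IntegrableOn (fun t => (f t)^2 * rho t) (Set.Ioc (-π) π) := by
  apply Measure.integrableOn_of_bounded (M := L^2 * (π/4)) measure_Ioc_lt_top.ne
    (((hf.pow 2).measurable.mul measurable_rho).aestronglyMeasurable)
  rw [ae_restrict_iff' measurableSet_Ioc]
  refine ae_of_all _ fun t ht => ?_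
  have h1 : |t| ≤ π := abs_le.2 ⟨ht.1.le, ht.2⟩
  rw [Real.norm_eq_abs]; change |(f t)^2 * rho t| ≤ _; rw [abs_of_nonneg (mul_nonneg (sq_nonneg _) (rho_nonneg t))]
  exact sq_rho_le hL0 (hL t h1) h1

lemma integral_sq_rho_le (f : ℝ → ℝ) (hm : Measurable f) {B : ℝ}
    (hb : ∀ t, |t| ≤ π → (f t)^2 * rho t ≤ B) :
    ∫ t in (-π)..π, (f t)^2 * rho t ≤ 2*π*B := by
  have hπ := Real.pi_pos
  have hππ : -π ≤ π := by linarith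
  have hB0 : 0 ≤ B := le_trans (mul_nonneg (sq_nonneg _) (rho_nonneg 0))
      (hb 0 (by simp [hπ.le]))
  have hint : IntegrableOn (fun t => (f t)^2 * rho t) (Set.Ioc (-π) π) := by
    apply Measure.integrableOn_of_bounded (M := B) measure_Ioc_lt_top.ne
      (((hm.pow_const 2).mul measurable_rho).aestronglyMeasurable)
    rw [ae_restrict_iff' measurableSet_Ioc]
    refine ae_of_all _ fun t ht => ?_
    rw [Real.norm_eq_abs]; change |(f t)^2 * rho t| ≤ _; rw [abs_of_nonneg (mul_nonneg (sq_nonneg _) (rho_nonneg t))]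
    exact hb t (abs_le.2 ⟨ht.1.le, ht.2⟩)
  calc ∫ t in (-π)..π, (f t)^2 * rho t ≤ ∫ _t in (-π)..π, B := by
        apply intervalIntegral.integral_mono_on hππ _ intervalIntegrable_const
          (fun t ht => hb t (abs_le.2 ⟨ht.1, ht.2⟩))
        rwa [intervalIntegrable_iff_integrableOn_Ioc_of_le hππ]
  _ = 2*π*B := by rw [intervalIntegral.integral_const, smul_eq_mul]; ring

lemma reduce (F : ℝ → ℝ) (he : ∀ x, F (-x) = F x) (hp : ∀ x, F (x + 2*π) = F x)
    (x : ℝ) : ∃ y, 0 ≤ y ∧ y ≤ π ∧ F x = F y := by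
  have hπ := Real.pi_pos
  have hper : Function.Periodic F (2*π) := hp
  set k : ℤ := round (x / (2*π)) with hk
  set z : ℝ := x - k * (2*π) with hz
  have habs : |z| ≤ π := by
    have h1 : |x / (2*π) - k| ≤ 1/2 := abs_sub_round _
    have h2π : (2*π) ≠ 0 := by positivity
    have h2 : z = (x / (2*π) - k) * (2*π) := by
      rw [hz, sub_mul, div_mul_cancel₀ _ h2π]
    rw [h2, abs_mul, abs_of_pos (by positivity : (0:ℝ) < 2*π)]
    nlinarith [abs_nonneg (x / (2*π) - k)]
  have hFz : F x = F z := (hper.sub_int_mul_eq k).symm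
  rcases le_or_gt 0 z with h | h
  · exact ⟨z, h, by rwa [abs_of_nonneg h] at habs, hFz⟩
  · refine ⟨-z, by linarith, by rwa [abs_of_neg h] at habs, ?_⟩
    rw [hFz, ← he z]

lemma lip (f : ℝ → ℝ) (hf : ContDiff ℝ (⊤:ℕ∞) f) (h0 : f 0 = 0) :
    ∃ L, 0 ≤ L ∧ ∀ t, |t| ≤ π → |f t| ≤ L * |t| := by
  have hπ := Real.pi_pos
  obtain ⟨K, hK⟩ := (isCompact_Icc (a := -π) (b := π)).exists_bound_of_continuousOn
      ((hf.continuous_deriv (by exact_mod_cast le_top)).continuousOn)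
  refine ⟨max K 0, le_max_right _ _, fun t ht => ?_⟩
  have h0mem : (0:ℝ) ∈ Set.Icc (-π) π := by constructor <;> linarith
  have htmem : t ∈ Set.Icc (-π) π := by
    rcases abs_le.1 ht with ⟨h1, h2⟩; exact ⟨h1, h2⟩
  have := Convex.norm_image_sub_le_of_norm_deriv_le (s := Set.Icc (-π) π) (C := max K 0)
    (fun y _ => (hf.differentiable (by simp)).differentiableAt)
    (fun y hy => (hK y hy).trans (le_max_left _ _)) (convex_Icc _ _) h0mem htmem
  simpa [h0, Real.norm_eq_abs] using this

lemma sub_sin_le_cube {x : ℝ} (hx : 0 ≤ x) : x - Real.sin x ≤ x^3/6 := by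
  have h1 : ∀ t ∈ Set.Icc (0:ℝ) x, 1 - Real.cos t ≤ t^2/2 := by
    intro t _
    have := Real.one_sub_sq_div_two_le_cos (x := t)
    linarith
  have h2 : ∫ t in (0:ℝ)..x, (1 - Real.cos t) = x - Real.sin x := by
    rw [intervalIntegral.integral_sub intervalIntegrable_const
      (Real.continuous_cos.intervalIntegrable 0 x), integral_one, integral_cos]
    simp
  have h3 : ∫ t in (0:ℝ)..x, t^2/2 = x^3/6 := by
    simp_rw [div_eq_mul_inv]
    rw [intervalIntegral.integral_mul_const, integral_pow]
    ring
  rw [← h2, ← h3]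
  apply intervalIntegral.integral_mono_on hx
    (intervalIntegrable_const.sub (Real.continuous_cos.intervalIntegrable 0 x))
    (((continuous_pow 2).div_const 2).intervalIntegrable 0 x) h1

end Stmt8Aux

namespace Stmt8Aux

lemma sqrt_rho_le {t : ℝ} (htπ : |t| ≤ π) (htne : t ≠ 0) :
    Real.sqrt (rho t) ≤ Real.sqrt π / (2*|t|) := by
  calc Real.sqrt (rho t) ≤ Real.sqrt (π/(4*t^2)) := Real.sqrt_le_sqrt (rho_le htπ htne)
  _ = Real.sqrt π / (2*|t|) := by
      rw [Real.sqrt_div Real.pi_pos.le,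
        show 4*t^2 = (2*|t|)^2 by rw [mul_pow, sq_abs]; ring,
        Real.sqrt_sq (by positivity)]

lemma keyCS (f : ℝ → ℝ) (hf : Continuous f) {L : ℝ} (hL0 : 0 ≤ L)
    (hL : ∀ t, |t| ≤ π → |f t| ≤ L * |t|) {x : ℝ} (hx0 : 0 ≤ x) (hxπ : x ≤ π) :
    |∫ t in (0:ℝ)..x, f t| ≤
      Real.sqrt (2*π*(x - Real.sin x)) * Real.sqrt (∫ t in (-π)..π, (f t)^2 * rho t) := by
  have hπ := Real.pi_pos
  have hππ : -π ≤ π := by linarith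
  have hIint : IntegrableOn (fun t => (f t)^2 * rho t) (Set.Ioc (-π) π) :=
    integrableOn_sq_rho f hf hL0 hL
  set μ := volume.restrict (Set.Ioc (0:ℝ) x) with hμ
  haveI : IsFiniteMeasure μ := ⟨by
    rw [hμ, Measure.restrict_apply_univ]; exact measure_Ioc_lt_top⟩
  set F := fun t => |f t| * Real.sqrt (rho t) with hF
  set G := fun t => Real.sqrt (2*π*(1 - Real.cos t)) with hG
  have hmem : ∀ t ∈ Set.Ioc (0:ℝ) x, 0 < t ∧ |t| ≤ π := fun t ht =>
    ⟨ht.1, abs_le.2 ⟨by linarith [ht.1], le_trans ht.2 hxπ⟩⟩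
  -- step A
  have hA : |∫ t in (0:ℝ)..x, f t| ≤ ∫ t in Set.Ioc (0:ℝ) x, |f t| := by
    calc |∫ t in (0:ℝ)..x, f t| ≤ ∫ t in (0:ℝ)..x, |f t| :=
          intervalIntegral.abs_integral_le_integral_abs hx0
    _ = ∫ t in Set.Ioc (0:ℝ) x, |f t| := intervalIntegral.integral_of_le hx0
  -- pointwise product representation
  have hpt : Set.EqOn (fun t => |f t|) (fun t => F t * G t) (Set.Ioc 0 x) := by
    intro t ht
    obtain ⟨htpos, htπ⟩ := hmem t ht
    have hc : 0 < 1 - Real.cos t := one_sub_cos_pos htπ (ne_of_gt htpos)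
    have hprod : rho t * (2*π*(1 - Real.cos t)) = 1 := by
      rw [rho]; field_simp
    show |f t| = F t * G t
    rw [hF, hG]; simp only
    rw [mul_assoc, ← Real.sqrt_mul (rho_nonneg t), hprod, Real.sqrt_one, mul_one]
  -- Hölder
  have hpq : Real.HolderConjugate 2 2 := Real.HolderConjugate.two_two
  have hFm : AEStronglyMeasurable F μ :=
    (hf.abs.measurable.mul (Real.continuous_sqrt.measurable.comp measurable_rho)).aestronglyMeasurable
  have hGm : AEStronglyMeasurable G μ :=
    (Real.continuous_sqrt.comp (by continuity : Continuous fun t : ℝ => 2*π*(1 - Real.cos t))).measurable.aestronglyMeasurable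
  have hFb : MemLp F (ENNReal.ofReal 2) μ := by
    apply MemLp.of_bound hFm (L * Real.sqrt π / 2)
    rw [hμ, ae_restrict_iff' measurableSet_Ioc]
    refine ae_of_all _ fun t ht => ?_
    obtain ⟨htpos, htπ⟩ := hmem t ht
    have htne : t ≠ 0 := ne_of_gt htpos
    have h1 := sqrt_rho_le htπ htne
    have habs : (0:ℝ) < |t| := abs_pos.2 htne
    rw [Real.norm_eq_abs, hF]
    simp only
    rw [abs_of_nonneg (mul_nonneg (abs_nonneg _) (Real.sqrt_nonneg _))]
    calc |f t| * Real.sqrt (rho t) ≤ (L * |t|) * (Real.sqrt π / (2*|t|)) :=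
          mul_le_mul (hL t htπ) h1 (Real.sqrt_nonneg _) (by positivity)
    _ = L * Real.sqrt π / 2 := by field_simp
  have hGb : MemLp G (ENNReal.ofReal 2) μ := by
    apply MemLp.of_bound hGm (Real.sqrt (4*π))
    refine ae_of_all _ fun t => ?_
    rw [Real.norm_eq_abs, hG]
    simp only
    rw [abs_of_nonneg (Real.sqrt_nonneg _)]
    apply Real.sqrt_le_sqrt
    nlinarith [Real.neg_one_le_cos t]
  have hH := MeasureTheory.integral_mul_le_Lp_mul_Lq_of_nonneg hpq
    (ae_of_all _ fun t => mul_nonneg (abs_nonneg _) (Real.sqrt_nonneg _))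
    (ae_of_all _ fun t => Real.sqrt_nonneg _) hFb hGb
  -- identify ∫ F^2
  have hF2 : (∫ t, F t ^ (2:ℝ) ∂μ) = ∫ t in Set.Ioc (0:ℝ) x, (f t)^2 * rho t := by
    rw [hμ]
    apply integral_congr_ae
    refine ae_of_all _ fun t => ?_
    show F t ^ (2:ℝ) = f t ^ 2 * rho t
    rw [show F t ^ (2:ℝ) = F t ^ (2:ℕ) from by rw [← Real.rpow_natCast]; norm_num, hF]
    simp only
    rw [mul_pow, sq_abs, Real.sq_sqrt (rho_nonneg t)]
  have hG2 : (∫ t, G t ^ (2:ℝ) ∂μ) = 2*π*(x - Real.sin x) := by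
    have h1 : (∫ t, G t ^ (2:ℝ) ∂μ) = ∫ t in Set.Ioc (0:ℝ) x, 2*π*(1 - Real.cos t) := by
      rw [hμ]
      apply integral_congr_ae
      refine ae_of_all _ fun t => ?_
      show G t ^ (2:ℝ) = 2*π*(1 - Real.cos t)
      rw [show G t ^ (2:ℝ) = G t ^ (2:ℕ) from by rw [← Real.rpow_natCast]; norm_num, hG]
      simp only
      rw [Real.sq_sqrt (by nlinarith [Real.cos_le_one t] : (0:ℝ) ≤ 2*π*(1 - Real.cos t))]
    rw [h1, ← intervalIntegral.integral_of_le hx0]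
    rw [intervalIntegral.integral_const_mul,
      intervalIntegral.integral_sub intervalIntegrable_const
        (Real.continuous_cos.intervalIntegrable 0 x), integral_one, integral_cos]
    simp
  -- monotonicity
  have hmono : ∫ t in Set.Ioc (0:ℝ) x, (f t)^2 * rho t
      ≤ ∫ t in (-π)..π, (f t)^2 * rho t := by
    rw [intervalIntegral.integral_of_le hππ]
    apply setIntegral_mono_set hIint
    · exact ae_of_all _ fun t => mul_nonneg (sq_nonneg _) (rho_nonneg t)
    · exact HasSubset.Subset.eventuallyLE (Set.Ioc_subset_Ioc (by linarith) hxπ)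
  -- assemble
  have hIset : ∫ t in Set.Ioc (0:ℝ) x, |f t| = ∫ t, F t * G t ∂μ := by
    rw [hμ]; exact setIntegral_congr_fun measurableSet_Ioc hpt
  have hfg0 : (0:ℝ) ≤ ∫ t in Set.Ioc (0:ℝ) x, (f t)^2 * rho t :=
    setIntegral_nonneg measurableSet_Ioc fun t _ => mul_nonneg (sq_nonneg _) (rho_nonneg t)
  calc |∫ t in (0:ℝ)..x, f t| ≤ ∫ t, F t * G t ∂μ := by rw [← hIset]; exact hA
  _ ≤ (∫ t, F t ^ (2:ℝ) ∂μ) ^ ((1:ℝ)/2) * (∫ t, G t ^ (2:ℝ) ∂μ) ^ ((1:ℝ)/2) := hH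
  _ = Real.sqrt (∫ t in Set.Ioc (0:ℝ) x, (f t)^2 * rho t) * Real.sqrt (2*π*(x - Real.sin x)) := by
      rw [hF2, hG2, ← Real.sqrt_eq_rpow, ← Real.sqrt_eq_rpow]
  _ ≤ Real.sqrt (∫ t in (-π)..π, (f t)^2 * rho t) * Real.sqrt (2*π*(x - Real.sin x)) := by
      apply mul_le_mul_of_nonneg_right (Real.sqrt_le_sqrt hmono) (Real.sqrt_nonneg _)
  _ = Real.sqrt (2*π*(x - Real.sin x)) * Real.sqrt (∫ t in (-π)..π, (f t)^2 * rho t) :=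
      mul_comm _ _

end Stmt8Aux

namespace Stmt8Aux

lemma wnorm_est (f : ℝ → ℝ) (hm : Measurable f) (hev : ∀ t, (f (-t))^2 = (f t)^2)
    {B : ℝ} (hB : ∀ t, 0 ≤ t → t ≤ π → (f t)^2 * rho t ≤ B) :
    ∫ t in (-π)..π, (f t)^2 * rho t ≤ 2*π*B := by
  apply integral_sq_rho_le f hm
  intro t ht
  rcases le_or_gt 0 t with h | h
  · exact hB t h (abs_le.1 ht).2
  · have h2 := hB (-t) (by linarith) (by linarith [(abs_le.1 ht).1])
    rw [hev t, rho_even t] at h2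
    exact h2

lemma cube_sq_rho_bound {g : ℝ → ℝ} {t E : ℝ} (hE0 : 0 ≤ E) (h0 : 0 ≤ t) (ht : t ≤ π)
    (hsq : (g t)^2 ≤ (2*π/3)*t^3*E^2) : (g t)^2 * rho t ≤ 4*π^3*E^2 := by
  have hπ := Real.pi_pos
  rcases eq_or_lt_of_le h0 with h | h
  · rw [← h, rho_zero, mul_zero]; positivity
  · have htne : t ≠ 0 := ne_of_gt h
    have habs : |t| ≤ π := abs_le.2 ⟨by linarith, ht⟩
    have h4 : rho t ≤ π/(4*t^2) := rho_le habs htne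
    calc (g t)^2 * rho t ≤ ((2*π/3)*t^3*E^2) * (π/(4*t^2)) :=
          mul_le_mul hsq h4 (rho_nonneg t) (by positivity)
    _ = (π^2/6)*t*E^2 := by field_simp; ring
    _ ≤ 4*π^3*E^2 := by
        nlinarith [mul_le_mul_of_nonneg_left ht (by positivity : (0:ℝ) ≤ π^2*E^2),
          mul_nonneg (pow_nonneg Real.pi_pos.le 3) (sq_nonneg E)]

end Stmt8Aux

open Stmt8Aux

set_option maxHeartbeats 2000000

/-- Lower-order weighted `L²` and `L^∞` estimates: there is an absolute constant
`C > 0` such that for all smooth odd `2π`-periodic `u, ω` with `u_x(0) = 0` and `ψ`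
the odd `2π`-periodic stream function solving `−ψ'' = ω`, setting
`E = ((1/2)(‖u_x‖_ρ² + ‖ω‖_ρ²))^{1/2}`, one has
`‖ψ‖_ρ, ‖ψ_x − ψ_x(0)‖_ρ, ‖u‖_ρ ≤ CE` and
`‖ψ_x‖_∞, ‖ψ/sin x‖_∞, ‖u‖_∞ ≤ CE`. -/
theorem stmt8 : ∃ C : ℝ, 0 < C ∧
    ∀ u ω ψ : ℝ → ℝ,
      ContDiff ℝ (⊤:ℕ∞) u → ContDiff ℝ (⊤:ℕ∞) ω → ContDiff ℝ (⊤:ℕ∞) ψ →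
      (∀ x, u (-x) = -(u x)) → (∀ x, ω (-x) = -(ω x)) → (∀ x, ψ (-x) = -(ψ x)) →
      (∀ x, u (x + 2*π) = u x) → (∀ x, ω (x + 2*π) = ω x) → (∀ x, ψ (x + 2*π) = ψ x) →
      deriv u 0 = 0 →
      (∀ x, -(deriv (deriv ψ) x) = ω x) →
      ∀ E : ℝ,
        E = Real.sqrt ((1/2) * ((∫ x in (-π)..π, (deriv u x)^2 * rho x)
              + (∫ x in (-π)..π, (ω x)^2 * rho x))) →
        wnorm ψ ≤ C * E ∧
        wnorm (fun x => deriv ψ x - deriv ψ 0) ≤ C * E ∧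
        wnorm u ≤ C * E ∧
        (∀ x, |deriv ψ x| ≤ C * E) ∧
        (∀ x, |ψ x / Real.sin x| ≤ C * E) ∧
        (∀ x, |u x| ≤ C * E) := by
  have hπ := Real.pi_pos
  have hπ4 : π ≤ 4 := Real.pi_le_four
  refine ⟨100, by norm_num, ?_⟩
  intro u ω ψ hu hω hψ huodd hωodd hψodd huper hωper hψper hu'0 hψω E hE
  -- zero values
  have hu0 : u 0 = 0 := by have h := huodd 0; rw [neg_zero] at h; linarith
  have hω0 : ω 0 = 0 := by have h := hωodd 0; rw [neg_zero] at h; linarith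
  have hψzero : ψ 0 = 0 := by have h := hψodd 0; rw [neg_zero] at h; linarith
  have hψpi : ψ π = 0 := by
    have h1 := hψper (-π)
    rw [show -π + 2*π = π by ring] at h1
    have h2 := hψodd π
    linarith
  -- smoothness facts
  have hωc : Continuous ω := hω.continuous
  have hψcont : Continuous ψ := hψ.continuous
  have hud : Differentiable ℝ u := hu.differentiable (by simp)
  have hψd : Differentiable ℝ ψ := hψ.differentiable (by simp)
  have hdu : ContDiff ℝ (⊤:ℕ∞) (deriv u) := (contDiff_infty_iff_deriv.mp hu).2
  have hdψsm : ContDiff ℝ (⊤:ℕ∞) (deriv ψ) := (contDiff_infty_iff_deriv.mp hψ).2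
  have hduc : Continuous (deriv u) := hu.continuous_deriv (by exact_mod_cast le_top)
  have hdψc : Continuous (deriv ψ) := hψ.continuous_deriv (by exact_mod_cast le_top)
  have hdψd : Differentiable ℝ (deriv ψ) := hdψsm.differentiable (by simp)
  have hddψc : Continuous (deriv (deriv ψ)) := by
    have h : deriv (deriv ψ) = fun x => -(ω x) := funext fun x => by
      have := hψω x; linarith
    rw [h]; exact hωc.neg
  -- energies
  set Iu := ∫ x in (-π)..π, (deriv u x)^2 * rho x with hIu
  set Iω := ∫ x in (-π)..π, (ω x)^2 * rho x with hIω
  have hππle : -π ≤ π := by linarith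
  have hIu0 : 0 ≤ Iu := intervalIntegral.integral_nonneg hππle
    (fun t _ => mul_nonneg (sq_nonneg _) (rho_nonneg t))
  have hIω0 : 0 ≤ Iω := intervalIntegral.integral_nonneg hππle
    (fun t _ => mul_nonneg (sq_nonneg _) (rho_nonneg t))
  have hE0 : 0 ≤ E := hE ▸ Real.sqrt_nonneg _
  have hE2 : E^2 = (1/2)*(Iu + Iω) := by
    rw [hE, Real.sq_sqrt (by linarith)]
  have hIuE : Iu ≤ 2*E^2 := by linarith
  have hIωE : Iω ≤ 2*E^2 := by linarith
  -- Lipschitz data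
  obtain ⟨Lω, hLω0, hLω⟩ := lip ω hω hω0
  obtain ⟨Lu, hLu0, hLu⟩ := lip (deriv u) hdu hu'0
  -- FTC representations
  have hgFTC : ∀ x : ℝ, deriv ψ x - deriv ψ 0 = -∫ t in (0:ℝ)..x, ω t := by
    intro x
    have h1 : ∫ t in (0:ℝ)..x, deriv (deriv ψ) t = deriv ψ x - deriv ψ 0 :=
      intervalIntegral.integral_deriv_eq_sub (fun t _ => hdψd.differentiableAt)
        (hddψc.intervalIntegrable 0 x)
    have h2 : ∫ t in (0:ℝ)..x, deriv (deriv ψ) t = ∫ t in (0:ℝ)..x, -ω t := by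
      apply intervalIntegral.integral_congr
      intro t _
      have := hψω t; dsimp only; linarith
    rw [h2, intervalIntegral.integral_neg] at h1
    linarith
  have huFTC : ∀ x : ℝ, u x = ∫ t in (0:ℝ)..x, deriv u t := by
    intro x
    have h1 : ∫ t in (0:ℝ)..x, deriv u t = u x - u 0 :=
      intervalIntegral.integral_deriv_eq_sub (fun t _ => hud.differentiableAt)
        (hduc.intervalIntegrable 0 x)
    rw [hu0] at h1; linarith
  have hψFTC : ∀ x : ℝ, ψ x = ∫ t in (0:ℝ)..x, deriv ψ t := by
    intro x
    have h1 : ∫ t in (0:ℝ)..x, deriv ψ t = ψ x - ψ 0 :=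
      intervalIntegral.integral_deriv_eq_sub (fun t _ => hψd.differentiableAt)
        (hdψc.intervalIntegrable 0 x)
    rw [hψzero] at h1; linarith
  -- key L∞ estimates on [0, π]
  have hg_bound : ∀ x, 0 ≤ x → x ≤ π → |deriv ψ x - deriv ψ 0| ≤ 2*π*E := by
    intro x h0 hπx
    rw [hgFTC x, abs_neg]
    calc |∫ t in (0:ℝ)..x, ω t| ≤ Real.sqrt (2*π*(x - Real.sin x)) * Real.sqrt Iω :=
          keyCS ω hωc hLω0 hLω h0 hπx
    _ ≤ 2*π*E := by
        apply sqrt_mul_sqrt_le (by nlinarith [Real.sin_le h0]) (by positivity)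
        have hxs : x - Real.sin x ≤ π := by
          nlinarith [Real.sin_nonneg_of_nonneg_of_le_pi h0 hπx]
        have hxs0 : 0 ≤ x - Real.sin x := by nlinarith [Real.sin_le h0]
        calc 2*π*(x - Real.sin x) * Iω ≤ (2*π*π) * (2*E^2) :=
              mul_le_mul (by nlinarith) hIωE hIω0 (by positivity)
        _ = (2*π*E)^2 := by ring
  have hu_bound : ∀ x, 0 ≤ x → x ≤ π → |u x| ≤ 2*π*E := by
    intro x h0 hπx
    rw [huFTC x]
    calc |∫ t in (0:ℝ)..x, deriv u t| ≤ Real.sqrt (2*π*(x - Real.sin x)) * Real.sqrt Iu :=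
          keyCS (deriv u) hduc hLu0 hLu h0 hπx
    _ ≤ 2*π*E := by
        apply sqrt_mul_sqrt_le (by nlinarith [Real.sin_le h0]) (by positivity)
        have hxs : x - Real.sin x ≤ π := by
          nlinarith [Real.sin_nonneg_of_nonneg_of_le_pi h0 hπx]
        have hxs0 : 0 ≤ x - Real.sin x := by nlinarith [Real.sin_le h0]
        calc 2*π*(x - Real.sin x) * Iu ≤ (2*π*π) * (2*E^2) :=
              mul_le_mul (by nlinarith) hIuE hIu0 (by positivity)
        _ = (2*π*E)^2 := by ring
  -- deriv ψ 0 estimate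
  have hFTCπ : ∫ t in (0:ℝ)..π, deriv ψ t = 0 := by
    have h1 : ∫ t in (0:ℝ)..π, deriv ψ t = ψ π - ψ 0 :=
      intervalIntegral.integral_deriv_eq_sub (fun t _ => hψd.differentiableAt)
        (hdψc.intervalIntegrable 0 π)
    rw [hψpi, hψzero] at h1; linarith
  have hdψ0 : |deriv ψ 0| ≤ 2*π*E := by
    have h2 : ∫ t in (0:ℝ)..π, (deriv ψ t - deriv ψ 0) = -(π * deriv ψ 0) := by
      rw [intervalIntegral.integral_sub (hdψc.intervalIntegrable 0 π)
        intervalIntegrable_const, hFTCπ, intervalIntegral.integral_const, smul_eq_mul]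
      ring
    have h3 : ‖∫ t in (0:ℝ)..π, (deriv ψ t - deriv ψ 0)‖ ≤ (2*π*E) * |π - 0| := by
      apply intervalIntegral.norm_integral_le_of_norm_le_const
      intro t ht
      rw [Set.uIoc_of_le hπ.le] at ht
      rw [Real.norm_eq_abs]
      exact hg_bound t ht.1.le ht.2
    rw [h2, Real.norm_eq_abs, abs_neg, abs_mul, abs_of_pos hπ, sub_zero,
      abs_of_pos hπ] at h3
    nlinarith [abs_nonneg (deriv ψ 0)]
  have hdψIcc : ∀ x, 0 ≤ x → x ≤ π → |deriv ψ x| ≤ 4*π*E := by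
    intro x h0 hx
    calc |deriv ψ x| = |(deriv ψ x - deriv ψ 0) + deriv ψ 0| := by rw [sub_add_cancel]
    _ ≤ |deriv ψ x - deriv ψ 0| + |deriv ψ 0| := abs_add_le _ _
    _ ≤ 2*π*E + 2*π*E := add_le_add (hg_bound x h0 hx) hdψ0
    _ = 4*π*E := by ring
  -- symmetry of deriv ψ
  have hdψeven : ∀ x, deriv ψ (-x) = deriv ψ x := by
    intro x
    have h1 : (fun y => ψ (-y)) = (fun y => -ψ y) := funext hψodd
    have h2 := deriv_comp_neg ψ x
    rw [h1] at h2
    rw [deriv.fun_neg] at h2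
    linarith [h2]
  have hdψper : ∀ x, deriv ψ (x + 2*π) = deriv ψ x := by
    intro x
    have hfp : (fun y => ψ (y + 2*π)) = ψ := funext hψper
    rw [← deriv_comp_add_const ψ (2*π) x, hfp]
  -- global L∞ for deriv ψ
  have habs4 : ∀ x, |deriv ψ x| ≤ 4*π*E := by
    intro x
    obtain ⟨y, hy0, hyπ, hxy⟩ := reduce (fun x => |deriv ψ x|)
      (fun x => by show |deriv ψ (-x)| = |deriv ψ x|; rw [hdψeven])
      (fun x => by show |deriv ψ (x + 2*π)| = |deriv ψ x|; rw [hdψper]) x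
    rw [hxy]; exact hdψIcc y hy0 hyπ
  -- pointwise ψ bounds
  have hψb1 : ∀ x, 0 ≤ x → x ≤ π → |ψ x| ≤ (4*π*E) * x := by
    intro x h0 hx
    rw [hψFTC x]
    have h := intervalIntegral.norm_integral_le_of_norm_le_const
      (C := 4*π*E) (f := deriv ψ) (a := 0) (b := x) ?_
    · rw [Real.norm_eq_abs, sub_zero, abs_of_nonneg h0] at h; exact h
    · intro t ht
      rw [Set.uIoc_of_le h0] at ht
      rw [Real.norm_eq_abs]
      exact hdψIcc t ht.1.le (le_trans ht.2 hx)
  have hψb2 : ∀ x, 0 ≤ x → x ≤ π → |ψ x| ≤ (4*π*E) * (π - x) := by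
    intro x h0 hx
    have hFTC2 : ∫ t in x..π, deriv ψ t = ψ π - ψ x :=
      intervalIntegral.integral_deriv_eq_sub (fun t _ => hψd.differentiableAt)
        (hdψc.intervalIntegrable x π)
    have h := intervalIntegral.norm_integral_le_of_norm_le_const
      (C := 4*π*E) (f := deriv ψ) (a := x) (b := π) ?_
    · rw [hFTC2, hψpi, zero_sub, Real.norm_eq_abs, abs_neg,
        abs_of_nonneg (by linarith : (0:ℝ) ≤ π - x)] at h
      exact h
    · intro t ht
      rw [Set.uIoc_of_le hx] at ht
      rw [Real.norm_eq_abs]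
      exact hdψIcc t (le_trans h0 ht.1.le) ht.2
  -- ψ / sin bound on [0, π]
  have hψsinIcc : ∀ y, 0 ≤ y → y ≤ π → |ψ y / Real.sin y| ≤ 100 * E := by
    intro y h0 hy
    rcases eq_or_lt_of_le h0 with h | h0'
    · rw [← h]; simp [hψzero]; positivity
    rcases eq_or_lt_of_le hy with h | hyπ'
    · rw [h]; simp [hψpi]; positivity
    rcases le_or_gt y (π/2) with h2 | h2
    · have hsin : 2/π*y ≤ Real.sin y := Real.mul_le_sin h0 h2
      have hsin' : 2*y ≤ π * Real.sin y := by
        rw [div_mul_eq_mul_div, div_le_iff₀ hπ] at hsin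
        linarith
      have hsp : 0 < Real.sin y := by nlinarith
      rw [abs_div, abs_of_pos hsp, div_le_iff₀ hsp]
      calc |ψ y| ≤ (4*π*E) * y := hψb1 y h0 hy
      _ ≤ 100 * E * Real.sin y := by
          have hp2 : π^2 ≤ 16 := by nlinarith
          have hA : E*(2*y) ≤ E*(π*Real.sin y) := mul_le_mul_of_nonneg_left hsin' hE0
          have hB : π*(E*(2*y)) ≤ π*(E*(π*Real.sin y)) := mul_le_mul_of_nonneg_left hA hπ.le
          have hC : (0:ℝ) ≤ E*Real.sin y := mul_nonneg hE0 hsp.le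
          nlinarith [hB, hC, mul_nonneg (sub_nonneg.2 hp2) hC]
    · have hsin : 2/π*(π - y) ≤ Real.sin (π - y) :=
        Real.mul_le_sin (by linarith) (by linarith)
      rw [Real.sin_pi_sub] at hsin
      have hsin' : 2*(π - y) ≤ π * Real.sin y := by
        rw [div_mul_eq_mul_div, div_le_iff₀ hπ] at hsin
        linarith
      have hsp : 0 < Real.sin y := by nlinarith
      rw [abs_div, abs_of_pos hsp, div_le_iff₀ hsp]
      calc |ψ y| ≤ (4*π*E) * (π - y) := hψb2 y h0 hy
      _ ≤ 100 * E * Real.sin y := by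
          have hp2 : π^2 ≤ 16 := by nlinarith
          have hA : E*(2*(π - y)) ≤ E*(π*Real.sin y) := mul_le_mul_of_nonneg_left hsin' hE0
          have hB : π*(E*(2*(π - y))) ≤ π*(E*(π*Real.sin y)) := mul_le_mul_of_nonneg_left hA hπ.le
          have hC : (0:ℝ) ≤ E*Real.sin y := mul_nonneg hE0 hsp.le
          nlinarith [hB, hC, mul_nonneg (sub_nonneg.2 hp2) hC]
  -- squared key bounds for weighted estimates
  have hg_sqb : ∀ t, 0 ≤ t → t ≤ π → (deriv ψ t - deriv ψ 0)^2 ≤ (2*π/3)*t^3*E^2 := by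
    intro t h0 ht
    have hts0 : 0 ≤ t - Real.sin t := by nlinarith [Real.sin_le h0]
    have hb : |deriv ψ t - deriv ψ 0| ≤ Real.sqrt (2*π*(t - Real.sin t)) * Real.sqrt Iω := by
      rw [hgFTC t, abs_neg]; exact keyCS ω hωc hLω0 hLω h0 ht
    have h1 : (deriv ψ t - deriv ψ 0)^2
        ≤ (Real.sqrt (2*π*(t - Real.sin t)) * Real.sqrt Iω)^2 := by
      rw [← sq_abs]
      exact pow_le_pow_left₀ (abs_nonneg _) hb 2
    have h2 : (Real.sqrt (2*π*(t - Real.sin t)) * Real.sqrt Iω)^2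
        = (2*π*(t - Real.sin t)) * Iω := by
      rw [mul_pow, Real.sq_sqrt (by positivity), Real.sq_sqrt hIω0]
    have hcube : t - Real.sin t ≤ t^3/6 := sub_sin_le_cube h0
    calc (deriv ψ t - deriv ψ 0)^2 ≤ (2*π*(t - Real.sin t)) * Iω := by rw [← h2]; exact h1
    _ ≤ (2*π*(t^3/6)) * (2*E^2) :=
        mul_le_mul (by nlinarith) hIωE hIω0 (by positivity)
    _ = (2*π/3)*t^3*E^2 := by ring
  have hu_sqb : ∀ t, 0 ≤ t → t ≤ π → (u t)^2 ≤ (2*π/3)*t^3*E^2 := by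
    intro t h0 ht
    have hts0 : 0 ≤ t - Real.sin t := by nlinarith [Real.sin_le h0]
    have hb : |u t| ≤ Real.sqrt (2*π*(t - Real.sin t)) * Real.sqrt Iu := by
      rw [huFTC t]; exact keyCS (deriv u) hduc hLu0 hLu h0 ht
    have h1 : (u t)^2 ≤ (Real.sqrt (2*π*(t - Real.sin t)) * Real.sqrt Iu)^2 := by
      rw [← sq_abs]
      exact pow_le_pow_left₀ (abs_nonneg _) hb 2
    have h2 : (Real.sqrt (2*π*(t - Real.sin t)) * Real.sqrt Iu)^2
        = (2*π*(t - Real.sin t)) * Iu := by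
      rw [mul_pow, Real.sq_sqrt (by positivity), Real.sq_sqrt hIu0]
    have hcube : t - Real.sin t ≤ t^3/6 := sub_sin_le_cube h0
    calc (u t)^2 ≤ (2*π*(t - Real.sin t)) * Iu := by rw [← h2]; exact h1
    _ ≤ (2*π*(t^3/6)) * (2*E^2) :=
        mul_le_mul (by nlinarith) hIuE hIu0 (by positivity)
    _ = (2*π/3)*t^3*E^2 := by ring
  -- numeric fact
  have hnum : 2*π*(4*π^3*E^2) ≤ (100*E)^2 := by
    have hp2 : π^2 ≤ 16 := by nlinarith
    have hp4 : π^4 ≤ 256 := by nlinarith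
    have h8 : 8*π^4 ≤ 10000 := by nlinarith
    calc 2*π*(4*π^3*E^2) = (8*π^4)*E^2 := by ring
    _ ≤ 10000*E^2 := by nlinarith [sq_nonneg E]
    _ = (100*E)^2 := by ring
  -- weighted estimates
  have hwψ : wnorm ψ ≤ 100*E := by
    rw [wnorm]
    apply sqrt_le_of_le_sq (by positivity)
    calc ∫ x in (-π)..π, (ψ x)^2 * rho x ≤ 2*π*((4*π*E)^2*(π/4)) := by
          apply wnorm_est ψ hψcont.measurable (fun t => by rw [hψodd t, neg_sq])
          intro t h0 ht
          apply sq_rho_le (L := 4*π*E) (by positivity) ?_ (abs_le.2 ⟨by linarith, ht⟩)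
          rw [abs_of_nonneg h0]
          exact hψb1 t h0 ht
    _ ≤ (100*E)^2 := by
        calc 2*π*((4*π*E)^2*(π/4)) = 2*π*(4*π^3*E^2) := by ring
        _ ≤ (100*E)^2 := hnum
  have hwg : wnorm (fun x => deriv ψ x - deriv ψ 0) ≤ 100*E := by
    rw [wnorm]
    apply sqrt_le_of_le_sq (by positivity)
    calc ∫ x in (-π)..π, (deriv ψ x - deriv ψ 0)^2 * rho x ≤ 2*π*(4*π^3*E^2) := by
          apply wnorm_est _ ((hdψc.sub continuous_const).measurable)
            (fun t => by show (deriv ψ (-t) - deriv ψ 0)^2 = (deriv ψ t - deriv ψ 0)^2; rw [hdψeven t])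
          intro t h0 ht
          exact cube_sq_rho_bound (g := fun x => deriv ψ x - deriv ψ 0) hE0 h0 ht (hg_sqb t h0 ht)
    _ ≤ (100*E)^2 := hnum
  have hwu : wnorm u ≤ 100*E := by
    rw [wnorm]
    apply sqrt_le_of_le_sq (by positivity)
    calc ∫ x in (-π)..π, (u x)^2 * rho x ≤ 2*π*(4*π^3*E^2) := by
          apply wnorm_est u hu.continuous.measurable (fun t => by rw [huodd t, neg_sq])
          intro t h0 ht
          exact cube_sq_rho_bound hE0 h0 ht (hu_sqb t h0 ht)
    _ ≤ (100*E)^2 := hnum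
  -- conclusion
  refine ⟨hwψ, hwg, hwu, ?_, ?_, ?_⟩
  · intro x
    calc |deriv ψ x| ≤ 4*π*E := habs4 x
    _ ≤ 100*E := by nlinarith
  · intro x
    obtain ⟨y, hy0, hyπ, hxy⟩ := reduce (fun x => |ψ x / Real.sin x|)
      (fun x => by show |ψ (-x) / Real.sin (-x)| = |ψ x / Real.sin x|
                   rw [hψodd x, Real.sin_neg, neg_div_neg_eq])
      (fun x => by show |ψ (x + 2*π) / Real.sin (x + 2*π)| = |ψ x / Real.sin x|
                   rw [hψper x, Real.sin_add_two_pi]) x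
    rw [hxy]
    exact hψsinIcc y hy0 hyπ
  · intro x
    obtain ⟨y, hy0, hyπ, hxy⟩ := reduce (fun x => |u x|)
      (fun x => by show |u (-x)| = |u x|; rw [huodd x, abs_neg])
      (fun x => by show |u (x + 2*π)| = |u x|; rw [huper x]) x
    rw [hxy]
    calc |u y| ≤ 2*π*E := hu_bound y hy0 hyπ
    _ ≤ 100*E := by nlinarith
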